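/- Let G be a connected graph on n vertices such that Δ(G) + δ(G) ≥ n. Then Kemeny's constant satisfies K(G) < (2δ(G)/(δ(G) + Δ(G) − n + 1)) · n. In particular K(G) < 2n². -/

import Mathlib

open Finset Classical

/-- The number of spanning trees of a finite simple graph `G`. -/
noncomputable def numSpanningTrees {V : Type*} [Fintype V] (G : SimpleGraph V) : ℕ :=
  Nat.card {T : SimpleGraph V // T ≤ G ∧ T.IsTree}

/-- The number of spanning 2-forests of `G` with `i` and `j` in different components. -/
noncomputable def numSepForests {V : Type*} [Fintype V] (G : SimpleGraph V) (i j : V) : ℕ :=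
  Nat.card {F : SimpleGraph V // F ≤ G ∧ F.IsAcyclic ∧
    Nat.card F.ConnectedComponent = 2 ∧ ¬ F.Reachable i j}

/-- The effective resistance between `i` and `j`: the number of spanning 2-forests separating
`i` and `j` divided by the number of spanning trees. -/
noncomputable def effRes {V : Type*} [Fintype V] (G : SimpleGraph V) (i j : V) : ℝ :=
  (numSepForests G i j : ℝ) / (numSpanningTrees G : ℝ)

/-- Kemeny's constant of a connected graph `G`:
`K(G) = (1/(4m)) ∑_{i,j} d_i r_{i,j} d_j`. -/
noncomputable def kemeny {V : Type*} [Fintype V] (G : SimpleGraph V) : ℝ :=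
  (1 / (4 * (G.edgeFinset.card : ℝ))) *
    ∑ i : V, ∑ j : V, (G.degree i : ℝ) * effRes G i j * (G.degree j : ℝ)



namespace KemenyAux

open SimpleGraph

variable {V : Type*}

lemma reachable_deleteEdges_of_walk {G : SimpleGraph V} {x y u w : V}
    (hr : (G.deleteEdges {s(x, y)}).Reachable x y) (p : G.Walk u w) :
    (G.deleteEdges {s(x, y)}).Reachable u w := by
  induction p with
  | nil => exact Reachable.refl _
  | @cons a b c h q ih =>
    refine Reachable.trans ?_ ih
    by_cases he : s(a, b) = s(x, y)
    · rw [Sym2.eq_iff] at he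
      rcases he with ⟨rfl, rfl⟩ | ⟨rfl, rfl⟩
      · exact hr
      · exact hr.symm
    · exact Adj.reachable (by simp [SimpleGraph.deleteEdges_adj, h, he])

lemma isAcyclic_mono {G H : SimpleGraph V} (hle : G ≤ H) (hH : H.IsAcyclic) : G.IsAcyclic :=
  fun _ c hc => hH (c.mapLe hle) (hc.mapLe hle)

/-- Every connected graph has a spanning tree. -/
lemma exists_spanning_tree [Fintype V] (G : SimpleGraph V) (hG : G.Connected) :
    ∃ T, T ≤ G ∧ T.IsTree := by
  classical
  haveI : Fintype (SimpleGraph V) := Fintype.ofFinite _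
  have hne : (univ.filter (fun H : SimpleGraph V => H ≤ G ∧ H.Connected)).Nonempty :=
    ⟨G, by simp [hG]⟩
  obtain ⟨H, hHmem, hmin⟩ := Finset.exists_min_image _ (fun H : SimpleGraph V => H.edgeSet.ncard) hne
  simp only [mem_filter, mem_univ, true_and] at hHmem
  obtain ⟨hHle, hHconn⟩ := hHmem
  refine ⟨H, hHle, hHconn, ?_⟩
  intro v c hc
  -- c is a cycle in H; delete one of its edges
  cases c with
  | nil => exact hc.not_of_nil
  | @cons _ b _ h q =>
    have he : s(v, b) ∈ (Walk.cons h q).edges := by simp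
    have hreach : (H \ fromEdgeSet {s(v, b)}).Reachable v b :=
      (adj_and_reachable_delete_edges_iff_exists_cycle.mpr ⟨v, _, hc, he⟩).2
    set H' := H.deleteEdges {s(v, b)} with hH'
    have hreach' : H'.Reachable v b := hreach
    have hconn' : H'.Connected := by
      haveI : Nonempty V := ⟨v⟩
      refine ⟨fun a c => ?_⟩
      obtain ⟨p⟩ := hHconn.preconnected a c
      exact reachable_deleteEdges_of_walk hreach' p
    have hmem' : H' ∈ univ.filter (fun H : SimpleGraph V => H ≤ G ∧ H.Connected) := by
      simp only [mem_filter, mem_univ, true_and]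
      exact ⟨le_trans (SimpleGraph.deleteEdges_le _) hHle, hconn'⟩
    have hlt : H'.edgeSet.ncard < H.edgeSet.ncard := by
      apply Set.ncard_lt_ncard _ H.edgeSet.toFinite
      constructor
      · exact SimpleGraph.edgeSet_mono (SimpleGraph.deleteEdges_le _)
      · intro hsub
        have : s(v, b) ∈ H'.edgeSet := hsub (by simpa using h)
        rw [SimpleGraph.edgeSet_deleteEdges] at this
        simp at this
    exact absurd (hmin H' hmem') (by omega)

end KemenyAux



namespace KemenyAux2

open SimpleGraph

variable {V : Type*}

/-- From 2 components and separation, every vertex reaches `i` or `j`. -/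
lemma cover_of_card_two {F : SimpleGraph V} {i j : V}
    (h2 : Nat.card F.ConnectedComponent = 2) (hij : ¬F.Reachable i j) (v : V) :
    F.Reachable v i ∨ F.Reachable v j := by
  rw [Nat.card_eq_two_iff] at h2
  obtain ⟨a, b, hab, huniv⟩ := h2
  have hmem : ∀ c : F.ConnectedComponent, c = a ∨ c = b := by
    intro c
    have : c ∈ ({a, b} : Set F.ConnectedComponent) := huniv ▸ Set.mem_univ c
    simpa using this
  have hne : F.connectedComponentMk i ≠ F.connectedComponentMk j := by
    intro hh; exact hij (SimpleGraph.ConnectedComponent.exact hh)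
  have hv := hmem (F.connectedComponentMk v)
  have hi := hmem (F.connectedComponentMk i)
  have hj := hmem (F.connectedComponentMk j)
  have key : F.connectedComponentMk v = F.connectedComponentMk i ∨
      F.connectedComponentMk v = F.connectedComponentMk j := by
    rcases hi with hi | hi <;> rcases hj with hj | hj
    · exact absurd (hi.trans hj.symm) hne
    · rcases hv with hv | hv
      · exact Or.inl (hv.trans hi.symm)
      · exact Or.inr (hv.trans hj.symm)
    · rcases hv with hv | hv
      · exact Or.inr (hv.trans hj.symm)
      · exact Or.inl (hv.trans hi.symm)
    · exact absurd (hi.trans hj.symm) hne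
  rcases key with hk | hk
  · exact Or.inl (SimpleGraph.ConnectedComponent.exact hk)
  · exact Or.inr (SimpleGraph.ConnectedComponent.exact hk)

lemma card_two_of_cover {F : SimpleGraph V} {i j : V}
    (hcov : ∀ v, F.Reachable v i ∨ F.Reachable v j) (hij : ¬F.Reachable i j) :
    Nat.card F.ConnectedComponent = 2 := by
  rw [Nat.card_eq_two_iff]
  refine ⟨F.connectedComponentMk i, F.connectedComponentMk j, ?_, ?_⟩
  · intro hh; exact hij (SimpleGraph.ConnectedComponent.exact hh)
  · apply Set.eq_univ_of_forall
    intro c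
    obtain ⟨v, rfl⟩ := c.exists_rep
    rcases hcov v with hv | hv
    · exact Or.inl (SimpleGraph.ConnectedComponent.sound hv)
    · exact Or.inr (SimpleGraph.ConnectedComponent.sound hv)

/-- Adding an edge joining the two sides of a separated acyclic graph yields a tree. -/
lemma isTree_sup_edge {F : SimpleGraph V} {x y : V} (hF : F.IsAcyclic)
    (hxy : ¬F.Reachable x y) (hne : x ≠ y)
    (hcov : ∀ v, F.Reachable v x ∨ F.Reachable v y) :
    (F ⊔ edge x y).IsTree := by
  have hadj : (F ⊔ edge x y).Adj x y := by
    rw [sup_adj, edge_adj]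
    exact Or.inr ⟨Or.inl ⟨rfl, rfl⟩, hne⟩
  constructor
  · -- connected
    haveI : Nonempty V := ⟨x⟩
    refine ⟨fun a b => ?_⟩
    have hax : ∀ v : V, (F ⊔ edge x y).Reachable v x := by
      intro v
      rcases hcov v with hv | hv
      · exact hv.mono le_sup_left
      · exact (hv.mono le_sup_left).trans hadj.symm.reachable
    exact (hax a).trans (hax b).symm
  · -- acyclic
    intro v c hc
    by_cases he : s(x, y) ∈ c.edges
    · have := (adj_and_reachable_delete_edges_iff_exists_cycle.mpr ⟨v, c, hc, he⟩).2
      have heq : (F ⊔ edge x y) \ fromEdgeSet {s(x, y)} = F := by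
        ext a b
        simp only [sdiff_adj, sup_adj, edge_adj, fromEdgeSet_adj, Set.mem_singleton_iff]
        constructor
        · rintro ⟨hab | ⟨hor, hne'⟩, hnot⟩
          · exact hab
          · exfalso
            apply hnot
            refine ⟨?_, hne'⟩
            rw [Sym2.eq_iff]
            tauto
        · intro hab
          refine ⟨Or.inl hab, ?_⟩
          rintro ⟨heq, -⟩
          rw [Sym2.eq_iff] at heq
          rcases heq with ⟨rfl, rfl⟩ | ⟨rfl, rfl⟩
          · exact hxy hab.reachable
          · exact hxy hab.symm.reachable
      have this : ((F ⊔ edge x y) \ fromEdgeSet {s(x, y)}).Reachable x y := this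
      rw [heq] at this
      exact hxy this
    · -- cycle avoiding the new edge lives in F
      have hsub : ∀ e ∈ c.edges, e ∈ F.edgeSet := by
        intro e hec
        have hee := c.edges_subset_edgeSet hec
        rw [edgeSet_sup] at hee
        rcases hee with h1 | h2
        · exact h1
        · exfalso
          have : e = s(x, y) := by
            rw [edge, edgeSet_fromEdgeSet] at h2
            simpa using h2.1
          exact he (this ▸ hec)
      exact hF (c.transfer F hsub) (hc.transfer hsub)

/-- Walk invariant after deleting an edge. -/
lemma walk_deleteEdge_cases {T : SimpleGraph V} {x y : V} {u w : V} (p : T.Walk u w) :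
    (T.deleteEdges {s(x, y)}).Reachable u w ∨
      ((T.deleteEdges {s(x, y)}).Reachable u x ∧ (T.deleteEdges {s(x, y)}).Reachable w y) ∨
      ((T.deleteEdges {s(x, y)}).Reachable u y ∧ (T.deleteEdges {s(x, y)}).Reachable w x) := by
  induction p with
  | nil => exact Or.inl (Reachable.refl _)
  | @cons a b c h q ih =>
    by_cases he : s(a, b) = s(x, y)
    · rw [Sym2.eq_iff] at he
      rcases he with ⟨rfl, rfl⟩ | ⟨rfl, rfl⟩
      · -- a = x, b = y
        rcases ih with hbc | ⟨hba, hcb⟩ | ⟨hbb, hca⟩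
        · exact Or.inr (Or.inl ⟨Reachable.refl _, hbc.symm⟩)
        · exact Or.inl (hba.symm.trans hcb.symm)
        · exact Or.inl hca.symm
      · -- a = y, b = x
        rcases ih with hbc | ⟨hbb, hca⟩ | ⟨hba, hcb⟩
        · exact Or.inr (Or.inr ⟨Reachable.refl _, hbc.symm⟩)
        · exact Or.inl hca.symm
        · exact Or.inl (hba.symm.trans hcb.symm)
    · have hadj' : (T.deleteEdges {s(x, y)}).Adj a b := by
        simp [SimpleGraph.deleteEdges_adj, h, he]
      rcases ih with hbw | ⟨hbx, hwy⟩ | ⟨hby, hwx⟩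
      · exact Or.inl (hadj'.reachable.trans hbw)
      · exact Or.inr (Or.inl ⟨hadj'.reachable.trans hbx, hwy⟩)
      · exact Or.inr (Or.inr ⟨hadj'.reachable.trans hby, hwx⟩)

lemma tree_deleteEdge_cover {T : SimpleGraph V} (hT : T.Connected) {x y : V} (v : V) :
    (T.deleteEdges {s(x, y)}).Reachable v x ∨ (T.deleteEdges {s(x, y)}).Reachable v y := by
  obtain ⟨p⟩ := hT.preconnected v x
  rcases walk_deleteEdge_cases (x := x) (y := y) p with hvx | ⟨hvx, hxy⟩ | ⟨hvy, hxx⟩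
  · exact Or.inl hvx
  · exact Or.inl hvx
  · exact Or.inr hvy

lemma tree_deleteEdge_not_reachable {T : SimpleGraph V} (hT : T.IsAcyclic) {x y : V}
    (hadj : T.Adj x y) : ¬(T.deleteEdges {s(x, y)}).Reachable x y := by
  have hb : T.IsBridge s(x, y) := isAcyclic_iff_forall_adj_isBridge.mp hT hadj
  exact hb

/-- In a path starting at `j`, the edge incident to `j` is unique. -/
lemma unique_start_edge {G : SimpleGraph V} {j w x₁ x₂ : V} (p : G.Walk j w) (hp : p.IsPath)
    (h1 : s(j, x₁) ∈ p.edges) (h2 : s(j, x₂) ∈ p.edges) : x₁ = x₂ := by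
  induction p with
  | nil => simp at h1
  | @cons a b c h q ih =>
    rw [Walk.cons_isPath_iff] at hp
    have key : ∀ x : V, s(a, x) ∈ (Walk.cons h q).edges → x = b := by
      intro x hx
      rw [Walk.edges_cons, List.mem_cons] at hx
      rcases hx with hx | hx
      · rw [Sym2.eq_iff] at hx
        rcases hx with ⟨-, rfl⟩ | ⟨rfl, rfl⟩
        · rfl
        · exact absurd rfl h.ne
      · exact absurd (Walk.fst_mem_support_of_mem_edges q hx) hp.2
    rw [key x₁ h1, key x₂ h2]

/-- Uniqueness of the edge at `a` whose deletion separates `a` from `b` in a tree. -/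
lemma unique_sep_edge {T : SimpleGraph V} (hT : T.IsTree) {a b x₁ x₂ : V}
    (ha1 : T.Adj a x₁) (ha2 : T.Adj a x₂)
    (h1 : ¬(T.deleteEdges {s(a, x₁)}).Reachable a b)
    (h2 : ¬(T.deleteEdges {s(a, x₂)}).Reachable a b) : x₁ = x₂ := by
  obtain ⟨w⟩ := hT.isConnected.preconnected a b
  have hmem : ∀ x : V, ¬(T.deleteEdges {s(a, x)}).Reachable a b →
      s(a, x) ∈ (w.toPath : T.Walk a b).edges := by
    intro x hx
    by_contra hnot
    refine hx ⟨(w.toPath : T.Walk a b).toDeleteEdges {s(a, x)} ?_⟩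
    intro e he
    simp only [Set.mem_singleton_iff]
    intro hh
    exact hnot (hh ▸ he)
  exact unique_start_edge (w.toPath : T.Walk a b) w.toPath.2 (hmem x₁ h1) (hmem x₂ h2)

/-- Removing the added edge recovers the original graph. -/
lemma sup_edge_deleteEdges {F : SimpleGraph V} {x y : V} (hne : x ≠ y) (hnadj : ¬F.Adj x y) :
    (F ⊔ edge x y).deleteEdges {s(x, y)} = F := by
  ext a b
  simp only [deleteEdges_adj, sup_adj, edge_adj, Set.mem_singleton_iff]
  constructor
  · rintro ⟨hab | ⟨hor, hne'⟩, hnot⟩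
    · exact hab
    · exfalso
      apply hnot
      rw [Sym2.eq_iff]
      tauto
  · intro hab
    refine ⟨Or.inl hab, ?_⟩
    intro heq
    rw [Sym2.eq_iff] at heq
    rcases heq with ⟨rfl, rfl⟩ | ⟨rfl, rfl⟩
    · exact hnadj hab
    · exact hnadj hab.symm

end KemenyAux2

namespace KemenyAux3

open SimpleGraph

variable {V : Type*}

lemma edge_le {G : SimpleGraph V} {x y : V} (h : G.Adj x y) : edge x y ≤ G := by
  intro a b hab
  rw [edge_adj] at hab
  rcases hab.1 with ⟨rfl, rfl⟩ | ⟨rfl, rfl⟩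
  · exact h
  · exact h.symm

lemma numSepForests_self [Fintype V] (G : SimpleGraph V) (i : V) :
    numSepForests G i i = 0 := by
  rw [numSepForests]
  have : IsEmpty {F : SimpleGraph V // F ≤ G ∧ F.IsAcyclic ∧
      Nat.card F.ConnectedComponent = 2 ∧ ¬ F.Reachable i i} := by
    constructor
    rintro ⟨F, -, -, -, hr⟩
    exact hr (Reachable.refl i)
  exact Nat.card_of_isEmpty

lemma numSepForests_comm [Fintype V] (G : SimpleGraph V) (i j : V) :
    numSepForests G i j = numSepForests G j i := by
  rw [numSepForests, numSepForests]
  apply Nat.card_congr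
  apply Equiv.subtypeEquivRight
  intro F
  constructor
  · rintro ⟨h1, h2, h3, h4⟩
    exact ⟨h1, h2, h3, fun hr => h4 hr.symm⟩
  · rintro ⟨h1, h2, h3, h4⟩
    exact ⟨h1, h2, h3, fun hr => h4 hr.symm⟩

lemma numSepForests_triangle [Fintype V] (G : SimpleGraph V) (a b i : V) :
    numSepForests G a b ≤ numSepForests G a i + numSepForests G i b := by
  classical
  rw [numSepForests, numSepForests, numSepForests, ← Nat.card_sum]
  have := SimpleGraph.instFinite (V := V)
  apply Nat.card_le_card_of_injective
    (f := fun F : {F : SimpleGraph V // F ≤ G ∧ F.IsAcyclic ∧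
        Nat.card F.ConnectedComponent = 2 ∧ ¬ F.Reachable a b} =>
      if h : F.1.Reachable a i then
        Sum.inr (⟨F.1, F.2.1, F.2.2.1, F.2.2.2.1,
          fun hr => F.2.2.2.2 (h.trans hr)⟩ :
          {F : SimpleGraph V // F ≤ G ∧ F.IsAcyclic ∧
            Nat.card F.ConnectedComponent = 2 ∧ ¬ F.Reachable i b})
      else
        Sum.inl (⟨F.1, F.2.1, F.2.2.1, F.2.2.2.1, h⟩ :
          {F : SimpleGraph V // F ≤ G ∧ F.IsAcyclic ∧
            Nat.card F.ConnectedComponent = 2 ∧ ¬ F.Reachable a i}))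
  intro F₁ F₂ h
  simp only at h
  split_ifs at h with h1 h2
  · simp only [Sum.inr.injEq, Subtype.mk.injEq] at h
    exact Subtype.ext h
  · simp only [Sum.inl.injEq, Subtype.mk.injEq] at h
    exact Subtype.ext h

lemma numSpanningTrees_pos [Fintype V] {G : SimpleGraph V} (hG : G.Connected) :
    0 < numSpanningTrees G := by
  classical
  obtain ⟨T, hT⟩ := KemenyAux.exists_spanning_tree G hG
  rw [numSpanningTrees]
  haveI : Nonempty {T : SimpleGraph V // T ≤ G ∧ T.IsTree} := ⟨⟨T, hT⟩⟩
  exact Nat.card_pos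

end KemenyAux3

namespace KemenyAux4

open SimpleGraph KemenyAux2 KemenyAux3

variable {V : Type*} [Fintype V] {G : SimpleGraph V} {i j : V}

lemma sepT {F : SimpleGraph V} (hsep : ¬F.Reachable i j) {v : V}
    (h : F.Reachable v j ∧ v ≠ i) : ¬F.Reachable v i :=
  fun hr => hsep (hr.symm.trans h.1)

lemma sepF {F : SimpleGraph V} (hsep : ¬F.Reachable i j) {v : V}
    (h : ¬(F.Reachable v j ∧ v ≠ i)) : ¬F.Reachable j v := by
  intro hr
  by_cases hvi : v = i
  · subst hvi; exact hsep hr.symm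
  · exact h ⟨hr.symm, hvi⟩

lemma treeT {F : SimpleGraph V} (hle : F ≤ G) (hac : F.IsAcyclic)
    (h2 : Nat.card F.ConnectedComponent = 2) (hsep : ¬F.Reachable i j) {v : V}
    (hvj : G.Adj j v) (hvi : v = i ∨ G.Adj i v) (h : F.Reachable v j ∧ v ≠ i) :
    F ⊔ edge v i ≤ G ∧ (F ⊔ edge v i).IsTree := by
  have hGvi : G.Adj v i := (hvi.resolve_left h.2).symm
  refine ⟨sup_le hle (edge_le hGvi), isTree_sup_edge hac (sepT hsep h) h.2 ?_⟩
  intro u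
  rcases cover_of_card_two h2 hsep u with hu | hu
  · exact Or.inr hu
  · exact Or.inl (hu.trans h.1.symm)

lemma treeF {F : SimpleGraph V} (hle : F ≤ G) (hac : F.IsAcyclic)
    (h2 : Nat.card F.ConnectedComponent = 2) (hsep : ¬F.Reachable i j) {v : V}
    (hvj : G.Adj j v) (hvi : v = i ∨ G.Adj i v) (h : ¬(F.Reachable v j ∧ v ≠ i)) :
    F ⊔ edge j v ≤ G ∧ (F ⊔ edge j v).IsTree := by
  refine ⟨sup_le hle (edge_le hvj), isTree_sup_edge hac (sepF hsep h) hvj.ne ?_⟩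
  intro u
  rcases cover_of_card_two h2 hsep u with hu | hu
  · by_cases hvi' : v = i
    · exact Or.inr (hvi' ▸ hu)
    · have hnvj : ¬F.Reachable v j := fun hr => h ⟨hr, hvi'⟩
      have hvi2 : F.Reachable v i := (cover_of_card_two h2 hsep v).resolve_right hnvj
      exact Or.inr (hu.trans hvi2.symm)
  · exact Or.inl hu

lemma key_count (G : SimpleGraph V) {i j : V} (hij : i ≠ j) :
    (Finset.univ.filter (fun v => G.Adj j v ∧ (v = i ∨ G.Adj i v))).card * numSepForests G i j
      ≤ 2 * numSpanningTrees G := by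
  classical
  rw [numSepForests, numSpanningTrees]
  have hcard : (Finset.univ.filter (fun v => G.Adj j v ∧ (v = i ∨ G.Adj i v))).card
      = Nat.card {v : V // G.Adj j v ∧ (v = i ∨ G.Adj i v)} := by
    rw [Nat.card_eq_fintype_card, Fintype.card_subtype]
  have hbool : 2 * Nat.card {T : SimpleGraph V // T ≤ G ∧ T.IsTree}
      = Nat.card ({T : SimpleGraph V // T ≤ G ∧ T.IsTree} × Bool) := by
    rw [Nat.card_prod]
    simp [Nat.card_eq_fintype_card, Nat.mul_comm]
  rw [hcard, ← Nat.card_prod, hbool]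
  apply Nat.card_le_card_of_injective
    (f := fun p : {v : V // G.Adj j v ∧ (v = i ∨ G.Adj i v)} ×
        {F : SimpleGraph V // F ≤ G ∧ F.IsAcyclic ∧
          Nat.card F.ConnectedComponent = 2 ∧ ¬ F.Reachable i j} =>
      if h : p.2.1.Reachable p.1.1 j ∧ p.1.1 ≠ i then
        ((⟨p.2.1 ⊔ edge p.1.1 i,
          treeT p.2.2.1 p.2.2.2.1 p.2.2.2.2.1 p.2.2.2.2.2 p.1.2.1 p.1.2.2 h⟩ :
          {T : SimpleGraph V // T ≤ G ∧ T.IsTree}), true)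
      else
        ((⟨p.2.1 ⊔ edge j p.1.1,
          treeF p.2.2.1 p.2.2.2.1 p.2.2.2.2.1 p.2.2.2.2.2 p.1.2.1 p.1.2.2 h⟩ :
          {T : SimpleGraph V // T ≤ G ∧ T.IsTree}), false))
  rintro ⟨⟨v₁, hv₁⟩, ⟨F₁, hF₁⟩⟩ ⟨⟨v₂, hv₂⟩, ⟨F₂, hF₂⟩⟩ heq
  simp only at heq
  split_ifs at heq with h1 h2
  · -- both true
    rw [Prod.mk.injEq, Subtype.mk.injEq] at heq
    obtain ⟨hTeq, -⟩ := heq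
    have htree : (F₁ ⊔ edge v₁ i).IsTree :=
      (treeT hF₁.1 hF₁.2.1 hF₁.2.2.1 hF₁.2.2.2 hv₁.1 hv₁.2 h1).2
    have hadj1 : (F₁ ⊔ edge v₁ i).Adj i v₁ := by
      rw [sup_adj, edge_adj]
      exact Or.inr ⟨Or.inr ⟨rfl, rfl⟩, Ne.symm h1.2⟩
    have hadj2 : (F₁ ⊔ edge v₁ i).Adj i v₂ := by
      rw [hTeq, sup_adj, edge_adj]
      exact Or.inr ⟨Or.inr ⟨rfl, rfl⟩, Ne.symm h2.2⟩
    have hdel1 : (F₁ ⊔ edge v₁ i).deleteEdges {s(i, v₁)} = F₁ := by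
      rw [Sym2.eq_swap]
      exact sup_edge_deleteEdges h1.2 (fun ha => sepT hF₁.2.2.2 h1 ha.reachable)
    have hdel2 : (F₁ ⊔ edge v₁ i).deleteEdges {s(i, v₂)} = F₂ := by
      rw [hTeq, Sym2.eq_swap]
      exact sup_edge_deleteEdges h2.2 (fun ha => sepT hF₂.2.2.2 h2 ha.reachable)
    have hv12 : v₁ = v₂ := by
      refine unique_sep_edge htree (b := j) hadj1 hadj2 ?_ ?_
      · rw [hdel1]; exact hF₁.2.2.2
      · rw [hdel2]; exact hF₂.2.2.2
    have hF12 : F₁ = F₂ := by rw [← hdel2, ← hv12, hdel1]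
    subst hv12; subst hF12; rfl
  · simp at heq
  · simp at heq
  · -- both false
    rename_i h2
    rw [Prod.mk.injEq, Subtype.mk.injEq] at heq
    obtain ⟨hTeq, -⟩ := heq
    have htree : (F₁ ⊔ edge j v₁).IsTree :=
      (treeF hF₁.1 hF₁.2.1 hF₁.2.2.1 hF₁.2.2.2 hv₁.1 hv₁.2 h1).2
    have hadj1 : (F₁ ⊔ edge j v₁).Adj j v₁ := by
      rw [sup_adj, edge_adj]
      exact Or.inr ⟨Or.inl ⟨rfl, rfl⟩, hv₁.1.ne⟩
    have hadj2 : (F₁ ⊔ edge j v₁).Adj j v₂ := by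
      rw [hTeq, sup_adj, edge_adj]
      exact Or.inr ⟨Or.inl ⟨rfl, rfl⟩, hv₂.1.ne⟩
    have hdel1 : (F₁ ⊔ edge j v₁).deleteEdges {s(j, v₁)} = F₁ :=
      sup_edge_deleteEdges hv₁.1.ne (fun ha => sepF hF₁.2.2.2 h1 ha.reachable)
    have hdel2 : (F₁ ⊔ edge j v₁).deleteEdges {s(j, v₂)} = F₂ := by
      rw [hTeq]
      exact sup_edge_deleteEdges hv₂.1.ne (fun ha => sepF hF₂.2.2.2 h2 ha.reachable)
    have hv12 : v₁ = v₂ := by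
      refine unique_sep_edge htree (b := i) hadj1 hadj2 ?_ ?_
      · rw [hdel1]; exact fun hr => hF₁.2.2.2 hr.symm
      · rw [hdel2]; exact fun hr => hF₂.2.2.2 hr.symm
    have hF12 : F₁ = F₂ := by rw [← hdel2, ← hv12, hdel1]
    subst hv12; subst hF12; rfl

end KemenyAux4

namespace KemenyAux5

open SimpleGraph KemenyAux2 KemenyAux3 KemenyAux4

variable {V : Type*} [Fintype V]

set_option maxHeartbeats 1000000 in
theorem main {V : Type*} [Fintype V] [Nonempty V]
    (G : SimpleGraph V) (hG : G.Connected)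
    (h : Fintype.card V ≤ G.maxDegree + G.minDegree) :
    kemeny G <
      (2 * (G.minDegree : ℝ) /
        ((G.minDegree : ℝ) + (G.maxDegree : ℝ) - (Fintype.card V : ℝ) + 1)) *
        (Fintype.card V : ℝ) ∧
    kemeny G < 2 * (Fintype.card V : ℝ) ^ 2 := by
  classical
  obtain ⟨i, hdi⟩ := G.exists_maximal_degree_vertex
  set n := Fintype.card V with hn
  -- degree basics (ℕ)
  have hΔn : G.maxDegree + 1 ≤ n := G.maxDegree_lt_card_verts
  have hδ1 : 1 ≤ G.minDegree := by omega
  have hδΔ : G.minDegree ≤ G.maxDegree := (G.minDegree_le_degree i).trans (le_of_eq hdi.symm)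
  -- spanning trees
  have hTnat : 0 < numSpanningTrees G := numSpanningTrees_pos hG
  have hT : (0 : ℝ) < (numSpanningTrees G : ℝ) := by exact_mod_cast hTnat
  -- effRes basics
  have hrnn : ∀ a b : V, 0 ≤ effRes G a b := fun a b =>
    div_nonneg (Nat.cast_nonneg _) (Nat.cast_nonneg _)
  have hsym : ∀ a b : V, effRes G a b = effRes G b a := fun a b => by
    rw [effRes, effRes, numSepForests_comm]
  have hself : ∀ a : V, effRes G a a = 0 := fun a => by
    rw [effRes, numSepForests_self]; simp
  have htri : ∀ a b : V, effRes G a b ≤ effRes G a i + effRes G i b := by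
    intro a b
    rw [effRes, effRes, effRes, ← add_div, div_le_div_iff_of_pos_right hT]
    exact_mod_cast numSepForests_triangle G a b i
  -- real abbreviations
  set δR : ℝ := (G.minDegree : ℝ) with hδR
  set ΔR : ℝ := (G.maxDegree : ℝ) with hΔR
  set nR : ℝ := (n : ℝ) with hnR
  set sR : ℝ := δR + ΔR - nR + 1 with hsR
  have hs1 : (1 : ℝ) ≤ sR := by
    rw [hsR, hδR, hΔR, hnR]
    have : (n : ℝ) ≤ (G.maxDegree : ℝ) + (G.minDegree : ℝ) := by exact_mod_cast h
    linarith
  have hs0 : (0 : ℝ) < sR := lt_of_lt_of_le one_pos hs1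
  have hΔnR : ΔR + 1 ≤ nR := by rw [hΔR, hnR]; exact_mod_cast hΔn
  have hδ1R : (1 : ℝ) ≤ δR := by rw [hδR]; exact_mod_cast hδ1
  -- per-vertex bound
  have hperj : ∀ j : V, j ≠ i →
      (G.degree j : ℝ) * effRes G i j ≤ 2 + (nR - 1 - ΔR) * (2 / sR) := by
    intro j hji
    set Sj : ℕ := (Finset.univ.filter (fun v => G.Adj j v ∧ (v = i ∨ G.Adj i v))).card with hSj
    have hkey : (Sj : ℝ) * (numSepForests G i j : ℝ) ≤ 2 * (numSpanningTrees G : ℝ) := by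
      exact_mod_cast key_count G (Ne.symm hji)
    have h1 : (Sj : ℝ) * effRes G i j ≤ 2 := by
      rw [effRes, ← mul_div_assoc, div_le_iff₀ hT]
      calc (Sj : ℝ) * (numSepForests G i j : ℝ) ≤ 2 * (numSpanningTrees G : ℝ) := hkey
        _ = 2 * (numSpanningTrees G : ℝ) := rfl
    -- counting: degree j + Δ + 1 ≤ n + Sj
    have hSeq : (Finset.univ.filter (fun v => G.Adj j v ∧ (v = i ∨ G.Adj i v)))
        = G.neighborFinset j ∩ insert i (G.neighborFinset i) := by
      ext v
      simp only [Finset.mem_filter, Finset.mem_univ, true_and, Finset.mem_inter,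
        Finset.mem_insert, SimpleGraph.mem_neighborFinset]
    have hcount : G.degree j + G.maxDegree + 1 ≤ n + Sj := by
      have hA : (insert i (G.neighborFinset i)).card = G.maxDegree + 1 := by
        rw [Finset.card_insert_of_notMem (by simp), G.card_neighborFinset_eq_degree, hdi]
      have hie := Finset.card_union_add_card_inter (G.neighborFinset j)
        (insert i (G.neighborFinset i))
      have hun : (G.neighborFinset j ∪ insert i (G.neighborFinset i)).card ≤ n := by
        rw [hn, ← Finset.card_univ]
        exact Finset.card_le_univ _
      rw [hA, G.card_neighborFinset_eq_degree] at hie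
      rw [hSj, hSeq]
      omega
    have hSd : Sj ≤ G.degree j := by
      rw [hSj, hSeq, ← G.card_neighborFinset_eq_degree]
      exact Finset.card_le_card Finset.inter_subset_left
    -- transfer to ℝ
    have hcountR : (G.degree j : ℝ) + ΔR + 1 ≤ nR + (Sj : ℝ) := by
      rw [hΔR, hnR]; exact_mod_cast hcount
    have hSdR : (Sj : ℝ) ≤ (G.degree j : ℝ) := by exact_mod_cast hSd
    have hδdR : δR ≤ (G.degree j : ℝ) := by rw [hδR]; exact_mod_cast G.minDegree_le_degree j
    have hsS : sR ≤ (Sj : ℝ) := by rw [hsR]; linarith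
    have hrle : effRes G i j ≤ 2 / sR := by
      rw [le_div_iff₀ hs0]
      calc effRes G i j * sR ≤ effRes G i j * (Sj : ℝ) :=
            mul_le_mul_of_nonneg_left hsS (hrnn i j)
        _ = (Sj : ℝ) * effRes G i j := mul_comm _ _
        _ ≤ 2 := h1
    have ht1 : ((G.degree j : ℝ) - (Sj : ℝ)) * effRes G i j ≤ (nR - 1 - ΔR) * (2 / sR) := by
      apply mul_le_mul (by linarith) hrle (hrnn i j) (by linarith)
    have hexp : (G.degree j : ℝ) * effRes G i j
        = (Sj : ℝ) * effRes G i j + ((G.degree j : ℝ) - (Sj : ℝ)) * effRes G i j := by ring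
    linarith
  -- the sum R
  set R : ℝ := ∑ b : V, (G.degree b : ℝ) * effRes G i b with hR
  have hRbound : R ≤ (nR - 1) * (2 * δR / sR) := by
    have hC : 2 + (nR - 1 - ΔR) * (2 / sR) = 2 * δR / sR := by
      field_simp
      ring_nf
      linarith
    have hzero : (G.degree i : ℝ) * effRes G i i = 0 := by rw [hself]; ring
    have hRsplit : R = ∑ b ∈ Finset.univ.erase i, (G.degree b : ℝ) * effRes G i b := by
      rw [hR, ← Finset.sum_erase (f := fun b => (G.degree b : ℝ) * effRes G i b)
        Finset.univ hzero]
    rw [hRsplit]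
    calc ∑ b ∈ Finset.univ.erase i, (G.degree b : ℝ) * effRes G i b
        ≤ ∑ b ∈ Finset.univ.erase i, (2 + (nR - 1 - ΔR) * (2 / sR)) := by
          apply Finset.sum_le_sum
          intro b hb
          exact hperj b (Finset.ne_of_mem_erase hb)
      _ = ((n - 1 : ℕ) : ℝ) * (2 + (nR - 1 - ΔR) * (2 / sR)) := by
          rw [Finset.sum_const, Finset.card_erase_of_mem (Finset.mem_univ i),
            Finset.card_univ, nsmul_eq_mul]
      _ = (nR - 1) * (2 * δR / sR) := by
          rw [hC, hnR]
          have hn1 : 1 ≤ n := by omega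
          push_cast [hn1]
          ring
  -- kemeny ≤ R
  have hm2 : ∑ v : V, G.degree v = 2 * G.edgeFinset.card := G.sum_degrees_eq_twice_card_edges
  set m : ℝ := (G.edgeFinset.card : ℝ) with hm
  have hdeg_sum : ∑ b : V, (G.degree b : ℝ) = 2 * m := by
    rw [hm]; exact_mod_cast hm2
  have hm0 : (0 : ℝ) < m := by
    have : 1 ≤ G.degree i := by omega
    have h2m : 1 ≤ ∑ v : V, G.degree v :=
      le_trans this (Finset.single_le_sum (f := fun v => G.degree v)
        (fun v _ => Nat.zero_le _) (Finset.mem_univ i))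
    rw [hm2] at h2m
    rw [hm]
    have : 1 ≤ G.edgeFinset.card := by omega
    exact_mod_cast Nat.lt_of_lt_of_le Nat.zero_lt_one this
  have hKR : kemeny G ≤ R := by
    rw [kemeny]
    have hS4 : ∑ a : V, ∑ b : V, (G.degree a : ℝ) * effRes G a b * (G.degree b : ℝ)
        ≤ 4 * m * R := by
      have hstep : ∑ a : V, ∑ b : V, (G.degree a : ℝ) * effRes G a b * (G.degree b : ℝ)
          ≤ ∑ a : V, ∑ b : V,
            (G.degree a : ℝ) * (effRes G a i + effRes G i b) * (G.degree b : ℝ) := by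
        apply Finset.sum_le_sum; intro a _
        apply Finset.sum_le_sum; intro b _
        apply mul_le_mul_of_nonneg_right _ (Nat.cast_nonneg _)
        exact mul_le_mul_of_nonneg_left (htri a b) (Nat.cast_nonneg _)
      refine hstep.trans ?_
      have hinner : ∀ a : V, ∑ b : V,
          (G.degree a : ℝ) * (effRes G a i + effRes G i b) * (G.degree b : ℝ)
          = (G.degree a : ℝ) * effRes G a i * (2 * m)
            + (G.degree a : ℝ) * R := by
        intro a
        have hsplit : ∀ b : V,
            (G.degree a : ℝ) * (effRes G a i + effRes G i b) * (G.degree b : ℝ)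
            = ((G.degree a : ℝ) * effRes G a i) * (G.degree b : ℝ)
              + (G.degree a : ℝ) * ((G.degree b : ℝ) * effRes G i b) := fun b => by ring
        rw [Finset.sum_congr rfl (fun b _ => hsplit b), Finset.sum_add_distrib,
          ← Finset.mul_sum, ← Finset.mul_sum, hdeg_sum, ← hR]
      rw [Finset.sum_congr rfl (fun a _ => hinner a), Finset.sum_add_distrib,
        ← Finset.sum_mul, ← Finset.sum_mul]
      have hRi : ∑ a : V, (G.degree a : ℝ) * effRes G a i = R := by
        rw [hR]
        exact Finset.sum_congr rfl (fun a _ => by rw [hsym a i])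
      rw [hRi, hdeg_sum]
      have hRnn : 0 ≤ R := by
        rw [hR]
        exact Finset.sum_nonneg fun b _ => mul_nonneg (Nat.cast_nonneg _) (hrnn i b)
      nlinarith
    calc (1 / (4 * m)) * ∑ a : V, ∑ b : V,
          (G.degree a : ℝ) * effRes G a b * (G.degree b : ℝ)
        ≤ (1 / (4 * m)) * (4 * m * R) := by
          apply mul_le_mul_of_nonneg_left hS4
          positivity
      _ = R := by field_simp
  -- final chain
  have hq0 : 0 < 2 * δR / sR := by positivity
  have hfirst : kemeny G < 2 * δR / sR * nR := by
    have hnR1 : 1 ≤ nR := by rw [hnR]; exact_mod_cast Nat.one_le_iff_ne_zero.mpr (by positivity)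
    calc kemeny G ≤ R := hKR
      _ ≤ (nR - 1) * (2 * δR / sR) := hRbound
      _ < nR * (2 * δR / sR) := by nlinarith
      _ = 2 * δR / sR * nR := mul_comm _ _
  constructor
  · exact hfirst
  · have hq2 : 2 * δR / sR ≤ 2 * δR := by
      apply div_le_self (by linarith) hs1
    have hδn : δR ≤ nR - 1 := by
      have : δR ≤ ΔR := by rw [hδR, hΔR]; exact_mod_cast hδΔ
      linarith
    have hn0 : 0 < nR := by linarith [hΔnR, hδ1R]
    calc kemeny G < 2 * δR / sR * nR := hfirst
      _ ≤ 2 * δR * nR := by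
          apply mul_le_mul_of_nonneg_right hq2 (le_of_lt hn0)
      _ ≤ 2 * (nR - 1) * nR := by nlinarith
      _ < 2 * nR ^ 2 := by nlinarith

end KemenyAux5


/-- If `G` is connected on `n` vertices and `Δ(G) + δ(G) ≥ n`, then
`K(G) < (2δ(G)/(δ(G) + Δ(G) − n + 1))·n`; in particular `K(G) < 2n²`. -/
theorem kemeny_lt_of_maxDegree_add_minDegree {V : Type*} [Fintype V] [Nonempty V]
    (G : SimpleGraph V) (hG : G.Connected)
    (h : Fintype.card V ≤ G.maxDegree + G.minDegree) :
    kemeny G <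
      (2 * (G.minDegree : ℝ) /
        ((G.minDegree : ℝ) + (G.maxDegree : ℝ) - (Fintype.card V : ℝ) + 1)) *
        (Fintype.card V : ℝ) ∧
    kemeny G < 2 * (Fintype.card V : ℝ) ^ 2 := by
  exact KemenyAux5.main G hG h
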